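/- If each g_i is ν-Lipschitz, then for the variance-reduced vector p_i = g_i(w) − g_i(w₀) + G(w₀) with G(w₀) = (1/n)∑ᵢ g_i(w₀), and for any point x, one has (1/n)∑ᵢ‖p_i‖² ≤ 2ν²‖w − x‖² + 2ν²‖w₀ − x‖² + ‖G(w)‖², where G(w) = (1/n)∑ᵢ g_i(w). -/

import Mathlib

open scoped RealInnerProductSpace BigOperators
open Matrix Finset

noncomputable section

/-- Variance bound for the variance-reduced vector relative to an arbitrary point `x`. -/
theorem variance_bound_three_points {p n : ℕ} (hn : 0 < n)
    (g : Fin n → EuclideanSpace ℝ (Fin p) → EuclideanSpace ℝ (Fin p))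
    (G : EuclideanSpace ℝ (Fin p) → EuclideanSpace ℝ (Fin p))
    (hG : ∀ z, G z = (n : ℝ)⁻¹ • ∑ i, g i z)
    (ν : ℝ) (hlip : ∀ i a b, ‖g i a - g i b‖ ≤ ν * ‖a - b‖)
    (w w₀ x : EuclideanSpace ℝ (Fin p)) :
    (n : ℝ)⁻¹ * ∑ i, ‖g i w - g i w₀ + G w₀‖ ^ 2
      ≤ 2 * ν ^ 2 * ‖w - x‖ ^ 2 + 2 * ν ^ 2 * ‖w₀ - x‖ ^ 2 + ‖G w‖ ^ 2 := by
  have hn' : (n:ℝ) ≠ 0 := Nat.cast_ne_zero.mpr hn.ne'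
  have hnpos : (0:ℝ) < n := Nat.cast_pos.mpr hn
  set d : Fin n → EuclideanSpace ℝ (Fin p) := fun i => g i w - g i w₀ with hd
  set m : EuclideanSpace ℝ (Fin p) := G w - G w₀ with hm
  have hsum : ∑ i, d i = (n:ℝ) • m := by
    have : ∑ i, d i = (∑ i, g i w) - (∑ i, g i w₀) := by
      simp [hd, Finset.sum_sub_distrib]
    rw [this, hm, hG, hG]; simp [smul_sub, smul_smul, mul_inv_cancel₀ hn']
  have hzero : ∑ i, (d i - m) = 0 := by
    rw [Finset.sum_sub_distrib, hsum, Finset.sum_const, Finset.card_univ,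
      Fintype.card_fin, ← Nat.cast_smul_eq_nsmul ℝ, sub_self]
  -- decompose each p_i
  have hp : ∀ i, g i w - g i w₀ + G w₀ = (d i - m) + G w := by
    intro i; rw [hd, hm]; dsimp only; abel
  have key : ∑ i, ‖g i w - g i w₀ + G w₀‖ ^ 2
      = (∑ i, ‖d i - m‖ ^ 2) + (n:ℝ) * ‖G w‖ ^ 2 := by
    have expand : ∀ i, ‖g i w - g i w₀ + G w₀‖ ^ 2
        = ‖d i - m‖ ^ 2 + 2 * ⟪d i - m, G w⟫ + ‖G w‖ ^ 2 := by
      intro i; rw [hp i]; exact norm_add_sq_real _ _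
    rw [Finset.sum_congr rfl fun i _ => expand i]
    rw [Finset.sum_add_distrib, Finset.sum_add_distrib]
    have : ∑ i, 2 * ⟪d i - m, G w⟫ = 0 := by
      rw [← Finset.mul_sum, ← sum_inner, hzero, inner_zero_left, mul_zero]
    rw [this, Finset.sum_const, Finset.card_univ, Fintype.card_fin,
      nsmul_eq_mul]
    ring
  have hvar : ∑ i, ‖d i - m‖ ^ 2 ≤ ∑ i, ‖d i‖ ^ 2 := by
    have expand : ∀ i, ‖d i - m‖ ^ 2 = ‖d i‖ ^ 2 - 2 * ⟪d i, m⟫ + ‖m‖ ^ 2 := by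
      intro i; exact norm_sub_sq_real _ _
    rw [Finset.sum_congr rfl fun i _ => expand i]
    rw [Finset.sum_add_distrib, Finset.sum_sub_distrib]
    have h1 : ∑ i, 2 * ⟪d i, m⟫ = 2 * (n:ℝ) * ‖m‖ ^ 2 := by
      rw [← Finset.mul_sum, ← sum_inner, hsum, real_inner_smul_left,
        real_inner_self_eq_norm_sq]
      ring
    rw [h1, Finset.sum_const, Finset.card_univ, Fintype.card_fin, nsmul_eq_mul]
    nlinarith [sq_nonneg ‖m‖, hnpos]
  have hlipsum : ∑ i, ‖d i‖ ^ 2 ≤ (n:ℝ) * (ν ^ 2 * ‖w - w₀‖ ^ 2) := by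
    calc ∑ i, ‖d i‖ ^ 2 ≤ ∑ _i : Fin n, ν ^ 2 * ‖w - w₀‖ ^ 2 := by
          apply Finset.sum_le_sum
          intro i _
          have h := hlip i w w₀
          nlinarith [norm_nonneg (d i), h]
      _ = (n:ℝ) * (ν ^ 2 * ‖w - w₀‖ ^ 2) := by
          rw [Finset.sum_const, Finset.card_univ, Fintype.card_fin, nsmul_eq_mul]
  have htri : ν ^ 2 * ‖w - w₀‖ ^ 2 ≤ 2 * ν ^ 2 * ‖w - x‖ ^ 2 + 2 * ν ^ 2 * ‖w₀ - x‖ ^ 2 := by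
    have h : ‖w - w₀‖ ≤ ‖w - x‖ + ‖w₀ - x‖ := by
      calc ‖w - w₀‖ = ‖(w - x) - (w₀ - x)‖ := by abel_nf
        _ ≤ ‖w - x‖ + ‖w₀ - x‖ := norm_sub_le _ _
    have h2 : ‖w - w₀‖ ^ 2 ≤ 2 * ‖w - x‖ ^ 2 + 2 * ‖w₀ - x‖ ^ 2 := by
      nlinarith [norm_nonneg (w - w₀), sq_nonneg (‖w - x‖ - ‖w₀ - x‖)]
    nlinarith [mul_le_mul_of_nonneg_left h2 (sq_nonneg ν)]
  have : (n:ℝ)⁻¹ * ∑ i, ‖g i w - g i w₀ + G w₀‖ ^ 2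
      ≤ ν ^ 2 * ‖w - w₀‖ ^ 2 + ‖G w‖ ^ 2 := by
    rw [key]
    rw [inv_mul_le_iff₀ hnpos]
    calc (∑ i, ‖d i - m‖ ^ 2) + (n:ℝ) * ‖G w‖ ^ 2
        ≤ (n:ℝ) * (ν ^ 2 * ‖w - w₀‖ ^ 2) + (n:ℝ) * ‖G w‖ ^ 2 := by
          linarith [hvar, hlipsum]
      _ = (n:ℝ) * (ν ^ 2 * ‖w - w₀‖ ^ 2 + ‖G w‖ ^ 2) := by ring
  linarith
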